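/- arXiv:1710.03404 — 4 statements merged into one kernel-verified Lean document; each statement's English description precedes it below -/
import Mathlib

section
/- Let E be a left D-module such that every D-linear endomorphism of E is multiplication by a scalar in K (i.e. the natural map K → End_D(E) is bijective). Then for every R ∈ Art_K and every deformation (F, θ) of E over R: (1) the natural ring homomorphism R → End_{D_R}(F) sending r to r·id_F is bijective; and (2) every D_R-linear automorphism u of F satisfying θ ∘ u = θ equals r·id_F for some r ∈ 1 + m_R. -/
universe u v w w'

section Aux

open TensorProduct

variable {R : Type u} [CommRing R] {F : Type w'} [AddCommGroup F] [Module R F]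

lemma aux_map_smul_top (g : F →ₗ[R] F) (I : Ideal R) {x : F}
    (hx : x ∈ I • (⊤ : Submodule R F)) : g x ∈ I • (⊤ : Submodule R F) := by
  refine Submodule.smul_induction_on hx (fun r hr z _ => ?_) (fun y z hy hz => ?_)
  · rw [map_smul]; exact Submodule.smul_mem_smul hr trivial
  · rw [map_add]; exact add_mem hy hz

lemma aux_smul_mem (I J : Ideal R) {a : R} (ha : a ∈ I) {x : F}
    (hx : x ∈ J • (⊤ : Submodule R F)) : a • x ∈ (I * J) • (⊤ : Submodule R F) := by
  refine Submodule.smul_induction_on hx (fun b hb z _ => ?_) (fun y z hy hz => ?_)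
  · rw [smul_smul]
    exact Submodule.smul_mem_smul (Ideal.mul_mem_mul ha hb) trivial
  · rw [smul_add]; exact add_mem hy hz

lemma lemB [Module.Flat R F] (J P : Ideal R) {ι : Type*} [Fintype ι]
    (a : ι → R) (hPa : ∀ i, ∀ p ∈ P, p * a i ∈ J)
    (hind : ∀ c : ι → R, (∑ i, c i * a i) ∈ J → ∀ i, c i ∈ P)
    (x : ι → F) (hx : (∑ i, a i • x i) ∈ J • (⊤ : Submodule R F)) :
    ∀ i, x i ∈ P • (⊤ : Submodule R F) := by
  classical
  -- the maps (R ⧸ P) → (R ⧸ J), c ↦ c * a i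
  have hker : ∀ i, (P : Submodule R R) ≤ LinearMap.ker (a i • J.mkQ) := by
    intro i p hp
    simp only [LinearMap.mem_ker, LinearMap.smul_apply]
    rw [← map_smul, smul_eq_mul]
    exact (Submodule.Quotient.mk_eq_zero _).mpr (mul_comm p (a i) ▸ hPa i p hp)
  set vi : ∀ _ : ι, (R ⧸ P) →ₗ[R] (R ⧸ J) :=
    fun i => Submodule.liftQ (P : Submodule R R) (a i • J.mkQ) (hker i) with hvi
  set v : (ι → R ⧸ P) →ₗ[R] (R ⧸ J) := LinearMap.lsum R (fun _ : ι => R ⧸ P) R vi with hv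
  have hvapp : ∀ (c : ι → R), v (fun i => Submodule.Quotient.mk (c i))
      = J.mkQ (∑ i, a i * c i) := by
    intro c
    rw [hv]
    simp only [LinearMap.lsum_apply, LinearMap.sum_apply, LinearMap.comp_apply,
      LinearMap.proj_apply]
    rw [map_sum]
    refine Finset.sum_congr rfl fun i _ => ?_
    rw [hvi]
    simp only [Submodule.liftQ_apply, LinearMap.smul_apply]
    rw [← map_smul, smul_eq_mul]
  have hinj : Function.Injective v := by
    rw [← LinearMap.ker_eq_bot]
    refine (Submodule.eq_bot_iff _).mpr fun g hg => ?_
    have hrep : ∀ i : ι, ∃ c : R, Submodule.Quotient.mk c = g i :=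
      fun i => Submodule.Quotient.mk_surjective _ (g i)
    choose c hc using hrep
    have hg0 : v (fun i => Submodule.Quotient.mk (c i)) = 0 := by
      rw [show (fun i => (Submodule.Quotient.mk (c i) : R ⧸ P)) = g from funext hc]
      exact hg
    rw [hvapp] at hg0
    have hsum : (∑ i, c i * a i) ∈ J := by
      rw [← Submodule.Quotient.mk_eq_zero]
      rw [show (∑ i, c i * a i) = ∑ i, a i * c i by simp [mul_comm]]
      exact hg0
    funext i
    have := hind c hsum i
    rw [← hc i]
    exact (Submodule.Quotient.mk_eq_zero _).mpr this
  have hrt : Function.Injective (v.rTensor F) :=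
    Module.Flat.rTensor_preserves_injective_linearMap v hinj
  set t : (ι → R ⧸ P) ⊗[R] F :=
    ∑ i, (Pi.single i (1 : R ⧸ P)) ⊗ₜ[R] x i with ht
  have hvsingle : ∀ i, v (Pi.single i (1 : R ⧸ P)) = Ideal.Quotient.mk J (a i) := by
    intro i
    rw [hv]
    simp only [LinearMap.lsum_apply, LinearMap.sum_apply, LinearMap.comp_apply,
      LinearMap.proj_apply]
    rw [Finset.sum_eq_single i]
    · rw [Pi.single_eq_same, hvi]
      have h1 : (1 : R ⧸ P) = Submodule.Quotient.mk (1 : R) := rfl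
      rw [h1, Submodule.liftQ_apply, LinearMap.smul_apply, ← map_smul, smul_eq_mul, mul_one]
      rfl
    · intro j _ hj
      rw [Pi.single_eq_of_ne hj, map_zero]
    · intro h; exact absurd (Finset.mem_univ i) h
  have himg : (v.rTensor F) t = ∑ i, (Ideal.Quotient.mk J (a i)) ⊗ₜ[R] x i := by
    rw [ht, map_sum]
    exact Finset.sum_congr rfl fun i _ => by rw [LinearMap.rTensor_tmul, hvsingle]
  have hzero : (v.rTensor F) t = 0 := by
    rw [himg]
    apply (TensorProduct.quotTensorEquivQuotSMul F J).injective
    rw [map_sum, map_zero]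
    rw [Finset.sum_congr rfl fun i _ =>
      TensorProduct.quotTensorEquivQuotSMul_mk_tmul J (a i) (x i)]
    have hms : (∑ i, (Submodule.Quotient.mk (a i • x i) : F ⧸ (J • (⊤ : Submodule R F))))
        = Submodule.Quotient.mk (∑ i, a i • x i) :=
      (map_sum ((J • (⊤ : Submodule R F)).mkQ) (fun i => a i • x i) Finset.univ).symm
    rw [hms]
    exact (Submodule.Quotient.mk_eq_zero _).mpr hx
  have ht0 : t = 0 := hrt (by rw [hzero, map_zero])
  intro i₀
  have hproj := congrArg ((LinearMap.proj i₀ : (ι → R ⧸ P) →ₗ[R] R ⧸ P).rTensor F) ht0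
  rw [ht, map_sum, map_zero] at hproj
  have hsingle : ((1 : R ⧸ P) ⊗ₜ[R] x i₀ : (R ⧸ P) ⊗[R] F) = 0 := by
    rw [Finset.sum_eq_single i₀] at hproj
    · simpa using hproj
    · intro i _ hi
      rw [LinearMap.rTensor_tmul, LinearMap.proj_apply,
        Pi.single_eq_of_ne (Ne.symm hi), TensorProduct.zero_tmul]
    · simp
  have := congrArg (TensorProduct.quotTensorEquivQuotSMul F P) hsingle
  rw [map_zero, show (1 : R ⧸ P) = Ideal.Quotient.mk P 1 from rfl,
    TensorProduct.quotTensorEquivQuotSMul_mk_tmul, one_smul] at this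
  exact (Submodule.Quotient.mk_eq_zero _).mp this

end Aux

/-- Let `K` be a field of characteristic `0`, `D` an associative unital
`K`-algebra, and `E` a left `D`-module (given through its structure map
`s : D →ₐ[K] End_K E`) such that the natural map `K → End_D(E)` is bijective (every
`K`-endomorphism commuting with the `D`-action is a unique scalar).  Let `R` be an Artinian
local `K`-algebra with residue field `K` (witnessed by `ε : R →ₐ[K] K` with kernel the maximal
ideal), and let `(F, θ)` be a deformation of `E` over `R`: `F` is a left `D_R`-module (given
through `ρF : D →ₐ[K] End_R F`) flat over `R`, and `θ : F → E` is `D_R`-linear (i.e. `K`-linear,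
`ε`-semilinear over `R` and `D`-equivariant), surjective with kernel `m_R • F` (so that it
induces an isomorphism `K ⊗_R F ≅ E`).  Then:
(1) the natural ring homomorphism `R → End_{D_R}(F)`, `r ↦ r • id`, is bijective (every
`R`-endomorphism of `F` commuting with the `D`-action is a unique scalar `r ∈ R`); and
(2) every `D_R`-linear automorphism `u` of `F` with `θ ∘ u = θ` is `r • id` for some
`r ∈ 1 + m_R`. -/
theorem stmt_2 {K : Type u} [Field K] [CharZero K]
    {D : Type v} [Ring D] [Algebra K D]
    {E : Type w} [AddCommGroup E] [Module K E]
    (s : D →ₐ[K] Module.End K E)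
    (hschur : ∀ φ : Module.End K E, (∀ d : D, φ * s d = s d * φ) →
      ∃! c : K, ∀ x : E, φ x = c • x)
    {R : Type u} [CommRing R] [Algebra K R] [IsArtinianRing R] [IsLocalRing R]
    (ε : R →ₐ[K] K) (hε : RingHom.ker ε = IsLocalRing.maximalIdeal R)
    (F : Type w') [AddCommGroup F] [Module K F] [Module R F] [IsScalarTower K R F]
    [Module.Flat R F]
    (ρF : D →ₐ[K] Module.End R F) (θ : F →ₗ[K] E)
    (hθR : ∀ (r : R) (x : F), θ (r • x) = ε r • θ x)
    (hθD : ∀ (d : D) (x : F), θ (ρF d x) = s d (θ x))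
    (hsurj : Function.Surjective θ)
    (hker : ∀ x : F, θ x = 0 ↔ x ∈ IsLocalRing.maximalIdeal R • (⊤ : Submodule R F)) :
    (∀ ψ : Module.End R F, (∀ d : D, ψ * ρF d = ρF d * ψ) →
      ∃! r : R, ∀ x : F, ψ x = r • x) ∧
    (∀ u : F ≃ₗ[R] F, (∀ (d : D) (x : F), u (ρF d x) = ρF d (u x)) →
      (∀ x : F, θ (u x) = θ x) →
      ∃ r : R, r - 1 ∈ IsLocalRing.maximalIdeal R ∧ ∀ x : F, u x = r • x) := by
  classical
  set m : Ideal R := IsLocalRing.maximalIdeal R with hmdef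
  have mker : ∀ r : R, r ∈ m ↔ ε r = 0 := by
    intro r; exact hε ▸ RingHom.mem_ker
  have hεalg : ∀ c : K, ε (algebraMap K R c) = c := fun c => by simpa using ε.commutes c
  obtain ⟨n, hn⟩ : ∃ n : ℕ, m ^ n = ⊥ := by
    obtain ⟨n, hn⟩ := IsArtinianRing.isNilpotent_jacobson_bot (R := R)
    exact ⟨n, by rwa [IsLocalRing.jacobson_eq_maximalIdeal ⊥ bot_ne_top] at hn⟩
  obtain ⟨e₀, he₀⟩ : ∃ e : E, e ≠ 0 := by
    obtain ⟨c, -, hcu⟩ := hschur 0 (fun d => by rw [zero_mul, mul_zero])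
    by_contra h
    push_neg at h
    have h0 : (0 : K) = c := hcu 0 (fun x => by simp)
    have h1 : (1 : K) = c := hcu 1 (fun x => by simp [h x])
    exact one_ne_zero (h1.trans h0.symm)
  obtain ⟨x₀, hx₀⟩ := hsurj e₀
  have hx₀m : x₀ ∉ m • (⊤ : Submodule R F) := fun hmem =>
    he₀ (by rw [← hx₀]; exact (hker x₀).mpr hmem)
  -- faithfulness of the action of R on F
  have faithful : ∀ c : R, (∀ x : F, c • x = 0) → c = 0 := by
    intro c hc
    by_contra hc0
    have hex : ∃ k, c ∉ m ^ k := ⟨n, by rw [hn]; simpa using hc0⟩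
    have hspec : c ∉ m ^ (Nat.find hex) := Nat.find_spec hex
    have hk0 : Nat.find hex ≠ 0 := by
      intro h
      rw [h, pow_zero, Ideal.one_eq_top] at hspec
      exact hspec Submodule.mem_top
    have hpos : 0 < Nat.find hex := Nat.pos_of_ne_zero hk0
    have hmem : c ∈ m ^ (Nat.find hex - 1) :=
      not_not.mp (Nat.find_min hex (Nat.sub_lt hpos one_pos))
    have hsucc : Nat.find hex - 1 + 1 = Nat.find hex := Nat.succ_pred_eq_of_pos hpos
    have hPa : ∀ i : Fin 1, ∀ p ∈ m, p * (fun _ : Fin 1 => c) i ∈ m ^ (Nat.find hex) := by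
      intro i p hp
      rw [← hsucc, pow_succ']
      exact Ideal.mul_mem_mul hp hmem
    have hind : ∀ c' : Fin 1 → R, (∑ i, c' i * (fun _ : Fin 1 => c) i) ∈ m ^ (Nat.find hex) →
        ∀ i, c' i ∈ m := by
      intro c' hc' i
      rw [Fin.sum_univ_one] at hc'
      by_contra hcm
      have hu : IsUnit (c' 0) := by
        rwa [hmdef, IsLocalRing.mem_maximalIdeal, mem_nonunits_iff, not_not,
          show i = 0 from Subsingleton.elim i 0] at hcm
      have : c ∈ m ^ (Nat.find hex) := by
        have h2 : (↑hu.unit⁻¹ : R) * (c' 0 * c) ∈ m ^ (Nat.find hex) :=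
          Ideal.mul_mem_left _ _ hc'
        rwa [← mul_assoc, IsUnit.val_inv_mul, one_mul] at h2
      exact hspec this
    have := lemB (m ^ (Nat.find hex)) m (fun _ : Fin 1 => c) hPa hind (fun _ => x₀)
      (by rw [Fin.sum_univ_one, hc x₀]; exact Submodule.zero_mem _) 0
    exact hx₀m this
  -- a K-linear section of θ
  obtain ⟨σ, hσ⟩ : ∃ σ : E →ₗ[K] F, ∀ e, θ (σ e) = e := by
    obtain ⟨g, hg⟩ := θ.exists_rightInverse_of_surjective (LinearMap.range_eq_top.mpr hsurj)
    exact ⟨g, fun e => by simpa using LinearMap.congr_fun hg e⟩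
  have hcsmulF : ∀ (c : K) (r : R) (x : F), r • (c • x) = c • (r • x) := by
    intro c r x
    rw [← algebraMap_smul R c x, ← algebraMap_smul R c (r • x), smul_smul, smul_smul, mul_comm]
  have hsmulKR : ∀ (c : K) (x : F), algebraMap K R c • x = c • x := fun c x =>
    algebraMap_smul R c x
  -- Main lemma (A): refining a commuting endomorphism one step of the m-adic filtration
  have lemA : ∀ (k : ℕ) (φ : F →ₗ[R] F), (∀ (d : D) (x : F), φ (ρF d x) = ρF d (φ x)) →
      (∀ x : F, φ x ∈ m ^ k • (⊤ : Submodule R F)) →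
      ∃ r' : R, ∀ x : F, φ x - r' • x ∈ m ^ (k + 1) • (⊤ : Submodule R F) := by
    intro k φ hφD hφr
    set I : Ideal R := m ^ (k + 1) with hIdef
    -- scalars act via ε on the image of m^k in R ⧸ I
    have hmm : ∀ {r b : R}, r ∈ m → b ∈ m ^ k → r * b ∈ I := by
      intro r b hr hb
      rw [hIdef, pow_succ']
      exact Ideal.mul_mem_mul hr hb
    have hsm : ∀ (r b : R), b ∈ (m ^ k : Ideal R) →
        r • (I.mkQ b) = ε r • (I.mkQ b) := by
      intro r b hb
      have h1 : r • (I.mkQ b) = I.mkQ (r * b) := by rw [← map_smul, smul_eq_mul]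
      have h2 : ε r • (I.mkQ b) = I.mkQ (algebraMap K R (ε r) * b) := by
        rw [← algebraMap_smul R (ε r), ← map_smul, smul_eq_mul]
      have hm3 : r - algebraMap K R (ε r) ∈ m := by
        rw [mker, map_sub, hεalg, sub_self]
      rw [h1, h2, ← sub_eq_zero, ← map_sub, ← sub_mul]
      exact (Submodule.Quotient.mk_eq_zero _).mpr (hmm hm3 hb)
    set Vr : Submodule R (R ⧸ I) := Submodule.map I.mkQ (m ^ k : Ideal R) with hVr
    set V : Submodule K (R ⧸ I) :=
      { carrier := (Vr : Set (R ⧸ I))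
        add_mem' := fun h1 h2 => Vr.add_mem h1 h2
        zero_mem' := Vr.zero_mem
        smul_mem' := by
          intro c q hq
          rw [← algebraMap_smul R c q]
          exact Vr.smul_mem _ hq } with hV
    have hVmem : ∀ q : R ⧸ I, q ∈ V ↔ ∃ g ∈ (m ^ k : Ideal R), I.mkQ g = q := by
      intro q
      have h1 : q ∈ V ↔ q ∈ Vr := Iff.rfl
      rw [h1, hVr]
      exact Submodule.mem_map
    -- V is finite dimensional over K
    haveI : IsArtinian R (R ⧸ I) :=
      isArtinian_of_surjective R I.mkQ (Submodule.Quotient.mk_surjective I)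
    have hVsmul : ∀ (r : R) (q : R ⧸ I), q ∈ V → r • q = ε r • q := by
      intro r q hq
      obtain ⟨g, hg, rfl⟩ := (hVmem q).mp hq
      exact hsm r g hg
    haveI : IsArtinian K ↥V := by
      set emb : Submodule K ↥V → Submodule R (R ⧸ I) := fun W =>
        { carrier := (Submodule.map V.subtype W : Set (R ⧸ I))
          add_mem' := fun h1 h2 => (Submodule.map V.subtype W).add_mem h1 h2
          zero_mem' := (Submodule.map V.subtype W).zero_mem
          smul_mem' := by
            intro r q hq
            have hqV : q ∈ V := by
              obtain ⟨w, _, rfl⟩ := hq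
              exact w.2
            rw [SetLike.mem_coe] at hq ⊢
            rw [hVsmul r q hqV, ← algebraMap_smul K (ε r) q]
            exact (Submodule.map V.subtype W).smul_mem _ hq } with hemb
      have hembmono : StrictMono emb := by
        intro W1 W2 h
        refine lt_of_le_of_ne ?_ ?_
        · intro q hq
          obtain ⟨w, hw, rfl⟩ := hq
          exact ⟨w, h.le hw, rfl⟩
        · intro hEq
          apply h.ne
          apply Submodule.map_injective_of_injective V.injective_subtype
          have : ∀ W : Submodule K ↥V, (emb W : Set (R ⧸ I)) = (Submodule.map V.subtype W : Set (R ⧸ I)) := fun W => rfl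
          apply SetLike.coe_injective
          rw [← this W1, ← this W2, hEq]
      exact hembmono.wellFoundedLT
    have hfin : (Module.Basis.ofVectorSpaceIndex K ↥V).Finite :=
      IsArtinian.finite_of_linearIndependent
        ((Module.Basis.coe_ofVectorSpace K ↥V) ▸ (Module.Basis.ofVectorSpace K ↥V).linearIndependent)
    haveI := hfin.fintype
    set b : Module.Basis ↥(Module.Basis.ofVectorSpaceIndex K ↥V) K ↥V := Module.Basis.ofVectorSpace K ↥V with hb
    have hlift : ∀ i, ∃ g : R, g ∈ (m ^ k : Ideal R) ∧ I.mkQ g = ((b i : ↥V) : R ⧸ I) := by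
      intro i
      obtain ⟨g, hg, h⟩ := (hVmem _).mp (b i).2
      exact ⟨g, hg, h⟩
    choose a ha hπ using hlift
    have hPa : ∀ i, ∀ p ∈ m, p * a i ∈ I := fun i p hp => hmm hp (ha i)
    have hind : ∀ c : _ → R, (∑ i, c i * a i) ∈ I → ∀ i, c i ∈ m := by
      intro c hc i
      have h0 : (∑ j, ε (c j) • b j : ↥V) = 0 := by
        apply Subtype.ext
        push_cast [Submodule.coe_sum]
        have hterm : ∀ j, (ε (c j) • ((b j : ↥V) : R ⧸ I)) = I.mkQ (c j * a j) := by
          intro j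
          rw [← hπ j, ← hsm (c j) (a j) (ha j), ← map_smul, smul_eq_mul]
        rw [Finset.sum_congr rfl fun j _ => hterm j, ← map_sum]
        exact (Submodule.Quotient.mk_eq_zero _).mpr hc
      have := Fintype.linearIndependent_iff.mp b.linearIndependent (fun j => ε (c j)) h0 i
      rw [mker]
      exact this
    -- representation of elements of m^k • ⊤ in terms of the a i
    have rep : ∀ y ∈ (m ^ k : Ideal R) • (⊤ : Submodule R F),
        ∃ x : _ → F, y - ∑ i, a i • x i ∈ I • (⊤ : Submodule R F) := by
      intro y hy
      refine Submodule.smul_induction_on hy ?_ ?_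
      · intro g hg z _
        set q : ↥V := ⟨I.mkQ g, (hVmem _).mpr ⟨g, hg, rfl⟩⟩ with hq
        have hgg : g - ∑ i, algebraMap K R ((b.repr q) i) * a i ∈ I := by
          rw [← Submodule.Quotient.mk_eq_zero I]
          have : (Submodule.Quotient.mk (g - ∑ i, algebraMap K R ((b.repr q) i) * a i) : R ⧸ I)
              = I.mkQ g - ∑ i, I.mkQ (algebraMap K R ((b.repr q) i) * a i) := by
            rw [show ∀ z : R, (Submodule.Quotient.mk z : R ⧸ I) = I.mkQ z from fun z => rfl,
              map_sub, map_sum]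
          rw [this]
          have hterm : ∀ i, I.mkQ (algebraMap K R ((b.repr q) i) * a i)
              = (((b.repr q) i • b i : ↥V) : R ⧸ I) := by
            intro i
            rw [← smul_eq_mul, map_smul, algebraMap_smul, hπ i]
            rfl
          rw [Finset.sum_congr rfl fun i _ => hterm i, ← Submodule.coe_sum, b.sum_repr q]
          exact sub_self _
        refine ⟨fun i => algebraMap K R ((b.repr q) i) • z, ?_⟩
        have : ∑ i, a i • (algebraMap K R ((b.repr q) i) • z)
            = (∑ i, algebraMap K R ((b.repr q) i) * a i) • z := by
          rw [Finset.sum_smul]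
          exact Finset.sum_congr rfl fun i _ => by rw [smul_smul, mul_comm]
        rw [this, ← sub_smul]
        exact Submodule.smul_mem_smul hgg trivial
      · intro y1 y2 hy1 hy2
        obtain ⟨x1, hx1⟩ := hy1
        obtain ⟨x2, hx2⟩ := hy2
        refine ⟨fun i => x1 i + x2 i, ?_⟩
        have : y1 + y2 - ∑ i, a i • (x1 i + x2 i)
            = (y1 - ∑ i, a i • x1 i) + (y2 - ∑ i, a i • x2 i) := by
          rw [Finset.sum_congr rfl fun i _ => smul_add (a i) (x1 i) (x2 i),
            Finset.sum_add_distrib]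
          abel
        rw [this]
        exact Submodule.add_mem _ hx1 hx2
    have huniq : ∀ uu vv : _ → F, (∑ i, a i • (uu i - vv i)) ∈ I • (⊤ : Submodule R F) →
        ∀ i, θ (uu i) = θ (vv i) := by
      intro uu vv h i
      have := lemB I m a hPa hind (fun i => uu i - vv i) h i
      have h2 : θ (uu i - vv i) = 0 := (hker _).mpr this
      rw [map_sub, sub_eq_zero] at h2
      exact h2
    have hφm : ∀ w ∈ m • (⊤ : Submodule R F), φ w ∈ I • (⊤ : Submodule R F) := by
      intro w hw
      refine Submodule.smul_induction_on hw ?_ ?_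
      · intro r hr z _
        rw [map_smul]
        have := aux_smul_mem m (m ^ k) hr (hφr z)
        rwa [← pow_succ'] at this
      · intro w1 w2 h1 h2
        rw [map_add]; exact Submodule.add_mem _ h1 h2
    choose X hX using fun e : E => rep (φ (σ e)) (hφr (σ e))
    -- linearity and equivariance of e ↦ θ (X e i)
    have hIsub : ∀ (y z : F), y - z ∈ I • (⊤ : Submodule R F) →
        z - y ∈ I • (⊤ : Submodule R F) := by
      intro y z h
      have := Submodule.neg_mem _ h
      rwa [neg_sub] at this
    have hXadd : ∀ (e e' : E) i, θ (X (e + e') i) = θ (X e i) + θ (X e' i) := by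
      intro e e' i
      have hsplit : ∑ j, a j • (X (e + e') j - (X e j + X e' j))
          = (φ (σ e) - ∑ j, a j • X e j) + (φ (σ e') - ∑ j, a j • X e' j)
            - (φ (σ (e + e')) - ∑ j, a j • X (e + e') j)
            + (φ (σ (e + e')) - φ (σ e) - φ (σ e')) := by
        rw [Finset.sum_congr rfl fun j _ => smul_sub (a j) (X (e + e') j) (X e j + X e' j),
          Finset.sum_sub_distrib,
          Finset.sum_congr rfl fun j _ => smul_add (a j) (X e j) (X e' j),
          Finset.sum_add_distrib]
        abel
      have hlin : φ (σ (e + e')) - φ (σ e) - φ (σ e') = 0 := by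
        rw [map_add, map_add, sub_sub, sub_self]
      have hmem : ∑ j, a j • (X (e + e') j - (X e j + X e' j)) ∈ I • (⊤ : Submodule R F) := by
        rw [hsplit, hlin]
        rw [add_zero]
        exact Submodule.sub_mem _ (Submodule.add_mem _ (hX e) (hX e')) (hX (e + e'))
      have := huniq _ _ hmem i
      rw [this, map_add]
    have hXsmul : ∀ (ck : K) (e : E) i, θ (X (ck • e) i) = ck • θ (X e i) := by
      intro ck e i
      have hsplit : ∑ j, a j • (X (ck • e) j - ck • X e j)
          = ck • (φ (σ e) - ∑ j, a j • X e j)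
            - (φ (σ (ck • e)) - ∑ j, a j • X (ck • e) j)
            + (φ (σ (ck • e)) - ck • φ (σ e)) := by
        rw [Finset.sum_congr rfl fun j _ => smul_sub (a j) (X (ck • e) j) (ck • X e j),
          Finset.sum_sub_distrib,
          Finset.sum_congr rfl fun j _ => (hcsmulF ck (a j) (X e j)),
          ← Finset.smul_sum, smul_sub]
        abel
      have hlin : φ (σ (ck • e)) - ck • φ (σ e) = 0 := by
        rw [map_smul, ← algebraMap_smul R ck (σ e), map_smul, algebraMap_smul, sub_self]
      have hmem : ∑ j, a j • (X (ck • e) j - ck • X e j) ∈ I • (⊤ : Submodule R F) := by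
        rw [hsplit, hlin, add_zero]
        refine Submodule.sub_mem _ ?_ (hX (ck • e))
        rw [← algebraMap_smul R ck]
        exact Submodule.smul_mem _ _ (hX e)
      have := huniq _ _ hmem i
      rw [this, map_smul]
    have hXd : ∀ (d : D) (e : E) i, θ (X (s d e) i) = s d (θ (X e i)) := by
      intro d e i
      set w : F := σ (s d e) - ρF d (σ e) with hw
      have hwm : w ∈ m • (⊤ : Submodule R F) := by
        rw [← hker]
        rw [hw, map_sub, hσ, hθD, hσ, sub_self]
      have hsplit : ∑ j, a j • (X (s d e) j - ρF d (X e j))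
          = ρF d (φ (σ e) - ∑ j, a j • X e j)
            - (φ (σ (s d e)) - ∑ j, a j • X (s d e) j)
            + φ w := by
        rw [Finset.sum_congr rfl fun j _ => smul_sub (a j) (X (s d e) j) (ρF d (X e j)),
          Finset.sum_sub_distrib, map_sub (ρF d), map_sum (ρF d),
          Finset.sum_congr rfl fun j _ => (map_smul (ρF d) (a j) (X e j)).symm,
          hw, map_sub, hφD]
        abel
      have hmem : ∑ j, a j • (X (s d e) j - ρF d (X e j)) ∈ I • (⊤ : Submodule R F) := by
        rw [hsplit]
        exact Submodule.add_mem _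
          (Submodule.sub_mem _ (aux_map_smul_top (ρF d) I (hX e)) (hX (s d e)))
          (hφm w hwm)
      have := huniq _ _ hmem i
      rw [this, hθD]
    set f : _ → Module.End K E := fun i =>
      { toFun := fun e => θ (X e i)
        map_add' := fun e e' => hXadd e e' i
        map_smul' := fun ck e => hXsmul ck e i } with hf
    have hcomm : ∀ i, ∀ d : D, f i * s d = s d * f i := by
      intro i d
      apply LinearMap.ext
      intro e
      have h1 : (f i * s d) e = θ (X (s d e) i) := rfl
      have h2 : (s d * f i) e = s d (θ (X e i)) := rfl
      rw [h1, h2, hXd]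
    have hcK : ∀ i, ∃ ck : K, ∀ e : E, θ (X e i) = ck • e := fun i =>
      ⟨((hschur (f i) (hcomm i)).exists).choose, ((hschur (f i) (hcomm i)).exists).choose_spec⟩
    choose cK hcKs using hcK
    refine ⟨∑ i, algebraMap K R (cK i) * a i, ?_⟩
    have hr'mem : (∑ i, algebraMap K R (cK i) * a i) ∈ (m ^ k : Ideal R) :=
      Submodule.sum_mem _ fun i _ => Ideal.mul_mem_left _ _ (ha i)
    intro x
    set r' : R := ∑ i, algebraMap K R (cK i) * a i with hr'
    set e : E := θ x with he
    set w : F := x - σ e with hwdef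
    have hwm : w ∈ m • (⊤ : Submodule R F) := by
      rw [← hker, hwdef, map_sub, hσ, he, sub_self]
    have hφw : φ w ∈ I • (⊤ : Submodule R F) := hφm w hwm
    have hr'w : r' • w ∈ I • (⊤ : Submodule R F) := by
      have := aux_smul_mem (m ^ k) m hr'mem hwm
      rwa [← pow_succ] at this
    have hterm : ∀ i, a i • (X e i - cK i • σ e) ∈ I • (⊤ : Submodule R F) := by
      intro i
      have hz : θ (X e i - cK i • σ e) = 0 := by
        rw [map_sub, map_smul, hσ, hcKs i e, sub_self]
      have := aux_smul_mem (m ^ k) m (ha i) ((hker _).mp hz)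
      rwa [← pow_succ] at this
    have hsum : ∑ i, a i • (cK i • σ e) = r' • σ e := by
      rw [hr', Finset.sum_smul]
      refine Finset.sum_congr rfl fun i _ => ?_
      rw [← algebraMap_smul R (cK i) (σ e), smul_smul, mul_comm]
    have hident : φ x - r' • x
        = (φ (σ e) - ∑ i, a i • X e i) + (∑ i, a i • (X e i - cK i • σ e))
          + (φ w - r' • w) := by
      have hx' : x = σ e + w := by rw [hwdef]; abel
      conv_lhs => rw [hx']
      rw [map_add, smul_add,
        Finset.sum_congr rfl fun i _ => smul_sub (a i) (X e i) (cK i • σ e),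
        Finset.sum_sub_distrib, hsum]
      abel
    rw [hident]
    exact Submodule.add_mem _
      (Submodule.add_mem _ (hX e) (Submodule.sum_mem _ fun i _ => hterm i))
      (Submodule.sub_mem _ hφw hr'w)
  -- iterate lemA along the filtration
  have key : ∀ (ψ : Module.End R F), (∀ d : D, ψ * ρF d = ρF d * ψ) →
      ∀ k : ℕ, ∃ r : R, ∀ x : F, ψ x - r • x ∈ m ^ k • (⊤ : Submodule R F) := by
    intro ψ hψ k
    induction k with
    | zero =>
      refine ⟨0, fun x => ?_⟩
      rw [pow_zero, Ideal.one_eq_top, Submodule.top_smul]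
      exact Submodule.mem_top
    | succ k ih =>
      obtain ⟨r, hr⟩ := ih
      set φ : F →ₗ[R] F := ψ - r • (LinearMap.id : F →ₗ[R] F) with hφ
      have hφapp : ∀ x : F, φ x = ψ x - r • x := fun x => rfl
      have hφD : ∀ (d : D) (x : F), φ (ρF d x) = ρF d (φ x) := by
        intro d x
        have hcomm : ψ (ρF d x) = ρF d (ψ x) := LinearMap.congr_fun (hψ d) x
        rw [hφapp, hφapp, map_sub (ρF d), map_smul (ρF d), hcomm]
      obtain ⟨r', hr'⟩ := lemA k φ hφD (fun x => hr x)
      refine ⟨r + r', fun x => ?_⟩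
      have h2 := hr' x
      rw [hφapp] at h2
      rwa [add_smul, ← sub_sub]
  have part1 : ∀ ψ : Module.End R F, (∀ d : D, ψ * ρF d = ρF d * ψ) →
      ∃! r : R, ∀ x : F, ψ x = r • x := by
    intro ψ hψ
    obtain ⟨r, hr⟩ := key ψ hψ n
    have hr0 : ∀ x : F, ψ x = r • x := by
      intro x
      have h3 := hr x
      rw [hn, Submodule.bot_smul, Submodule.mem_bot] at h3
      exact sub_eq_zero.mp h3
    refine ⟨r, hr0, ?_⟩
    intro r2 hr2
    have h4 : ∀ x : F, (r2 - r) • x = 0 := by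
      intro x; rw [sub_smul, ← hr2 x, ← hr0 x, sub_self]
    exact sub_eq_zero.mp (faithful _ h4)
  refine ⟨part1, ?_⟩
  intro u hud huθ
  obtain ⟨r, hr, -⟩ := part1 (u : F →ₗ[R] F)
    (fun d => LinearMap.ext fun x => by
      have h1 : ((u : F →ₗ[R] F) * ρF d) x = u (ρF d x) := rfl
      have h2 : (ρF d * (u : F →ₗ[R] F)) x = ρF d (u x) := rfl
      rw [h1, h2, hud])
  refine ⟨r, ?_, hr⟩
  have hθr : θ (u x₀) = ε r • e₀ := by
    rw [show u x₀ = r • x₀ from hr x₀, hθR, hx₀]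
  rw [huθ x₀, hx₀] at hθr
  have hεone : ε r = 1 := by
    by_contra hne
    have h5 : (ε r - 1) • e₀ = 0 := by rw [sub_smul, one_smul, ← hθr, sub_self]
    rcases smul_eq_zero.mp h5 with h | h
    · exact hne (by rwa [sub_eq_zero] at h)
    · exact he₀ h
  rw [mker, map_sub, hεone, map_one, sub_self]
end

section
/- Let E be a left D-module satisfying: (i) End_D(E) is finite dimensional as a K-vector space; (ii) E is finitely presented as a left D-module; (iii) K̄ ⊗_K E is a simple module over the K̄-algebra K̄ ⊗_K D, where K̄ is an algebraic closure of K. Then every D-linear endomorphism of E is multiplication by a scalar in K; that is, the natural map K → End_D(E) is bijective. -/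
open scoped TensorProduct

universe u v

section Aux

variable {K : Type u} [Field K]
    {D : Type v} [Ring D] [Algebra K D]
    {E : Type v} [AddCommGroup E] [Module K E] [Module D E] [IsScalarTower K D E]

/-- Restriction of scalars as a `K`-algebra homomorphism from `End_D(E)` to `End_K(E)`. -/
def restrictEndAlgHom : Module.End D E →ₐ[K] Module.End K E where
  toFun f := f.restrictScalars K
  map_one' := rfl
  map_mul' _ _ := rfl
  map_zero' := rfl
  map_add' _ _ := rfl
  commutes' _ := rfl

end Aux

/-- Let `K` be a field of characteristic `0`, `D` an associative unital
`K`-algebra and `E` a left `D`-module such that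
(i) `End_D(E)` is finite dimensional over `K`;
(ii) `E` is finitely presented as a left `D`-module;
(iii) `K̄ ⊗_K E` is simple over `K̄ ⊗_K D` for an algebraic closure `K̄` of `K`
(simplicity of the base change is expressed as: the base change is nonzero and the only
`K̄`-subspaces stable under the base-changed `D`-action are `⊥` and `⊤`).
Then every `D`-linear endomorphism of `E` is multiplication by a unique scalar in `K`;
i.e. the natural map `K → End_D(E)` is bijective. -/
theorem stmt_3 {K : Type u} [Field K] [CharZero K]
    {D : Type v} [Ring D] [Algebra K D]
    {E : Type v} [AddCommGroup E] [Module K E] [Module D E] [IsScalarTower K D E]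
    (h1 : FiniteDimensional K (E →ₗ[D] E))
    (h2 : Module.FinitePresentation D E)
    (h3 : Nontrivial (AlgebraicClosure K ⊗[K] E) ∧
      ∀ p : Submodule (AlgebraicClosure K) (AlgebraicClosure K ⊗[K] E),
        (∀ d : D, ∀ x ∈ p,
          LinearMap.baseChange (AlgebraicClosure K) (Algebra.lsmul K K E d) x ∈ p) →
        p = ⊥ ∨ p = ⊤) :
    ∀ φ : E →ₗ[D] E, ∃! c : K, ∀ x : E, φ x = c • x := by
  classical
  set L := AlgebraicClosure K
  obtain ⟨hnt, hsimple⟩ := h3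
  -- E is nontrivial
  have hEnt : Nontrivial E := by
    by_contra h
    rw [not_nontrivial_iff_subsingleton] at h
    haveI : Subsingleton (L ⊗[K] E) := by
      constructor
      intro a b
      have : ∀ x : L ⊗[K] E, x = 0 := fun x => by
        induction x using TensorProduct.induction_on with
        | zero => rfl
        | tmul a m => rw [Subsingleton.elim m 0, TensorProduct.tmul_zero]
        | add x y hx hy => rw [hx, hy, add_zero]
      rw [this a, this b]
    exact not_nontrivial _ hnt
  intro φ
  -- base change of φ
  let g : Module.End K E →ₐ[K] Module.End L (L ⊗[K] E) := Module.End.baseChangeHom K L E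
  let φK : Module.End K E := φ.restrictScalars K
  let φL : Module.End L (L ⊗[K] E) := g φK
  -- φ is integral over K, take its minimal polynomial
  haveI : Module.Finite K (Module.End D E) := h1
  have hint : IsIntegral K φ := IsIntegral.of_finite K φ
  set p : Polynomial K := minpoly K φ with hp
  have hmon : p.Monic := minpoly.monic hint
  -- p(φL) = 0
  have haevalK : Polynomial.aeval φK p = 0 := by
    have : Polynomial.aeval (restrictEndAlgHom (K := K) (D := D) (E := E) φ) p
        = restrictEndAlgHom (K := K) (D := D) (E := E) (Polynomial.aeval φ p) :=
      (Polynomial.aeval_algHom_apply _ _ _)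
    rw [minpoly.aeval, map_zero] at this
    exact this
  have haevalL : Polynomial.aeval φL p = 0 := by
    rw [show φL = g φK from rfl, Polynomial.aeval_algHom_apply, haevalK, map_zero]
  -- factor p over L
  set q : Polynomial L := p.map (algebraMap K L) with hq
  have hqmon : q.Monic := hmon.map _
  have hqsplit : q.Splits := IsAlgClosed.splits q
  have hqeval : Polynomial.aeval φL q = 0 := by
    rw [hq, Polynomial.aeval_map_algebraMap, haevalL]
  have hfactor : q = (Multiset.map (fun a => Polynomial.X - Polynomial.C a) q.roots).prod :=
    hqsplit.eq_prod_roots_of_monic hqmon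
  set lst : List L := q.roots.toList with hlst
  -- evaluate the factorization at φL
  have hprod : (lst.map fun a => φL - algebraMap L (Module.End L (L ⊗[K] E)) a).prod = 0 := by
    have h0 := hqeval
    rw [hfactor, ← Multiset.coe_toList q.roots, Multiset.map_coe, Multiset.prod_coe,
      map_list_prod (Polynomial.aeval φL), List.map_map] at h0
    rw [← h0]
    congr 1
    ext a
    simp [Function.comp, hlst]
  -- some factor is not injective
  have hinj_all : ∀ l : List L,
      (∀ r ∈ l, Function.Injective (φL - algebraMap L (Module.End L (L ⊗[K] E)) r)) →
      Function.Injective ((l.map fun a => φL - algebraMap L (Module.End L (L ⊗[K] E)) a).prod) := by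
    intro l
    induction l with
    | nil => intro _; exact Function.injective_id
    | cons a s ih =>
      intro hl
      rw [List.map_cons, List.prod_cons]
      exact (hl a List.mem_cons_self).comp (ih fun r hr => hl r (List.mem_cons_of_mem a hr))
  have hex : ∃ r ∈ lst, ¬ Function.Injective
      (φL - algebraMap L (Module.End L (L ⊗[K] E)) r) := by
    by_contra hcon
    push_neg at hcon
    have hinj := hinj_all lst hcon
    rw [hprod] at hinj
    obtain ⟨x, y, hxy⟩ := hnt
    exact hxy (hinj (show (0 : Module.End L (L ⊗[K] E)) x = (0 : Module.End L (L ⊗[K] E)) y by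
      simp))
  obtain ⟨r, _, hninj⟩ := hex
  set ψ : Module.End L (L ⊗[K] E) := φL - algebraMap L (Module.End L (L ⊗[K] E)) r with hψ
  -- kernel of ψ is D-stable
  have hker_ne : LinearMap.ker ψ ≠ ⊥ := by
    intro h
    exact hninj (LinearMap.ker_eq_bot.mp h)
  have hcomm : ∀ d : D, ∀ x : L ⊗[K] E,
      ψ (LinearMap.baseChange L (Algebra.lsmul K K E d) x)
        = LinearMap.baseChange L (Algebra.lsmul K K E d) (ψ x) := by
    intro d x
    have h1' : φK ∘ₗ (Algebra.lsmul K K E d : Module.End K E)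
        = (Algebra.lsmul K K E d : Module.End K E) ∘ₗ φK := by
      ext y
      exact φ.map_smul d y
    have h2' : φL (LinearMap.baseChange L (Algebra.lsmul K K E d) x)
        = LinearMap.baseChange L (Algebra.lsmul K K E d) (φL x) := by
      have := congrArg (fun f => LinearMap.baseChange L f x) h1'
      change LinearMap.baseChange L φK (LinearMap.baseChange L (Algebra.lsmul K K E d) x)
        = LinearMap.baseChange L (Algebra.lsmul K K E d) (LinearMap.baseChange L φK x)
      simpa [LinearMap.baseChange_comp] using this
    simp only [hψ, LinearMap.sub_apply, Module.algebraMap_end_apply, h2', map_sub,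
      map_smul]
  have hstab : ∀ d : D, ∀ x ∈ LinearMap.ker ψ,
      LinearMap.baseChange L (Algebra.lsmul K K E d) x ∈ LinearMap.ker ψ := by
    intro d x hx
    rw [LinearMap.mem_ker] at hx ⊢
    rw [hcomm d x, hx, map_zero]
  have hker_top : LinearMap.ker ψ = ⊤ := by
    rcases hsimple (LinearMap.ker ψ) hstab with h | h
    · exact absurd h hker_ne
    · exact h
  -- so φL = r • id
  have hφL : ∀ x : L ⊗[K] E, φL x = r • x := by
    intro x
    have : ψ x = 0 := by rw [← LinearMap.mem_ker, hker_top]; trivial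
    have := sub_eq_zero.mp (by simpa [hψ, Module.algebraMap_end_apply] using this)
    simpa using this
  -- pick a basis of E
  obtain ⟨ι, b⟩ := Module.Free.exists_basis (R := K) (M := E)
  haveI : Nonempty ι := b.index_nonempty
  obtain ⟨i₀⟩ := ‹Nonempty ι›
  -- φL (1 ⊗ x) = 1 ⊗ φ x
  have hφLdef : φL = LinearMap.baseChange L φK := rfl
  have hφLtmul : ∀ x : E, φL ((1 : L) ⊗ₜ[K] x) = (1 : L) ⊗ₜ[K] φ x := fun x => by
    rw [hφLdef, LinearMap.baseChange_tmul]; rfl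
  -- r = algebraMap c
  set c : K := b.repr (φ (b i₀)) i₀ with hc
  have hr : r = algebraMap K L c := by
    have h1' : (1 : L) ⊗ₜ[K] φ (b i₀) = r • ((1 : L) ⊗ₜ[K] b i₀) := by
      rw [← hφLtmul, hφL]
    have h2' := congrArg (fun z => (Algebra.TensorProduct.basis L b).repr z i₀) h1'
    simp only [TensorProduct.smul_tmul', smul_eq_mul, mul_one,
      Algebra.TensorProduct.basis_repr_tmul, Finsupp.smul_apply, Finsupp.mapRange_apply,
      Module.Basis.repr_self, Finsupp.single_eq_same, one_smul, smul_eq_mul] at h2'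
    rw [← hc] at h2'
    simpa using h2'.symm
  -- conclude φ x = c • x for all x
  have key : ∀ x : E, φ x = c • x := by
    intro x
    have h1' : (1 : L) ⊗ₜ[K] φ x = (1 : L) ⊗ₜ[K] (c • x) := by
      rw [← hφLtmul x, hφL, hr, algebraMap_smul, TensorProduct.tmul_smul]
    have h2' := congrArg (fun z => (Algebra.TensorProduct.basis L b).repr z) h1'
    simp only [Algebra.TensorProduct.basis_repr_tmul, one_smul] at h2'
    have h3' : b.repr (φ x) = b.repr (c • x) := by
      ext i
      have := congrArg (fun f => f i) h2'
      simp only [Finsupp.mapRange_apply] at this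
      exact (algebraMap K L).injective this
    have := b.repr.injective h3'
    exact this
  refine ⟨c, key, ?_⟩
  intro c' hc'
  have hx : (c' - c) • b i₀ = 0 := by
    rw [sub_smul, ← hc' (b i₀), key (b i₀), sub_self]
  rcases smul_eq_zero.mp hx with h | h
  · exact sub_eq_zero.mp h
  · exact absurd h (b.ne_zero i₀)
end

section
/- Let E be a left D-module and K̄ an algebraic closure of K. The following are equivalent: (a) K̄ ⊗_K E is a simple module over K̄ ⊗_K D; (b) for every finite field extension L of K, L ⊗_K E is a simple module over L ⊗_K D. -/
open scoped TensorProduct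

universe u v

set_option synthInstance.maxHeartbeats 1000000
set_option maxHeartbeats 1000000

section helpers
variable {K : Type*} [Field K] {L : Type*} [Field L] {F : Type*} [Field F]
  [Algebra K L] [Algebra K F] [Algebra L F] [IsScalarTower K L F]
  {E : Type*} [AddCommGroup E] [Module K E]

noncomputable def psi : L ⊗[K] E →ₗ[L] F ⊗[K] E :=
  TensorProduct.AlgebraTensorModule.map (Algebra.linearMap L F) LinearMap.id

@[simp] lemma psi_tmul (l : L) (e : E) : (psi (K := K) (F := F)) (l ⊗ₜ e) = algebraMap L F l ⊗ₜ e := rfl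

lemma psi_injective : Function.Injective (psi (K := K) (L := L) (F := F) (E := E)) := by
  have h : Function.Injective (LinearMap.rTensor E ((Algebra.linearMap L F).restrictScalars K)) :=
    Module.Flat.rTensor_preserves_injective_linearMap _
      (by simpa [Algebra.coe_linearMap] using (algebraMap L F).injective)
  intro x y hxy
  apply h
  have : ∀ z : L ⊗[K] E, LinearMap.rTensor E ((Algebra.linearMap L F).restrictScalars K) z
      = psi (K := K) (F := F) z := by
    intro z
    induction z using TensorProduct.induction_on with
    | zero => simp
    | tmul l e => rfl
    | add a b ha hb => simp [ha, hb]
  rw [this, this, hxy]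
end helpers

section helpers2
variable {K : Type*} [Field K] {L : Type*} [Field L] {F : Type*} [Field F]
  [Algebra K L] [Algebra K F] [Algebra L F] [IsScalarTower K L F]
  {E : Type*} [AddCommGroup E] [Module K E]
  {D : Type*} [Ring D] [Algebra K D] [Module D E] [IsScalarTower K D E]

lemma psi_comm (d : D) (x : L ⊗[K] E) :
    psi (K := K) (F := F) (LinearMap.baseChange L (Algebra.lsmul K K E d) x)
      = LinearMap.baseChange F (Algebra.lsmul K K E d) (psi (K := K) (F := F) x) := by
  induction x using TensorProduct.induction_on with
  | zero => simp
  | tmul l e => rfl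
  | add a b ha hb => simp [ha, hb]

-- nontriviality transfer
lemma nontrivial_tensor_iff : Nontrivial (F ⊗[K] E) ↔ Nontrivial E := by
  constructor
  · intro h
    by_contra hE
    rw [not_nontrivial_iff_subsingleton] at hE
    have : ∀ x : F ⊗[K] E, x = 0 := by
      intro x
      induction x using TensorProduct.induction_on with
      | zero => rfl
      | tmul a e => rw [Subsingleton.elim e 0, TensorProduct.tmul_zero]
      | add a b ha hb => rw [ha, hb, add_zero]
    obtain ⟨a, b, hab⟩ := h
    exact hab ((this a).trans (this b).symm)
  · intro h
    obtain ⟨e, he⟩ := exists_ne (0 : E)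
    refine ⟨(1 : F) ⊗ₜ e, 0, ?_⟩
    intro hx
    have : Function.Injective (psi (K := K) (L := K) (F := F) (E := E)) := psi_injective
    have h2 : psi (K := K) (L := K) (F := F) ((1 : K) ⊗ₜ e) = (1:F) ⊗ₜ e := by simp
    have h3 : ((1:K) ⊗ₜ e : K ⊗[K] E) = 0 := this (by rw [h2, hx]; simp)
    have := congrArg (TensorProduct.lid K E) h3
    simp at this
    exact he this
end helpers2

section transfer
variable {K : Type*} [Field K] {L : Type*} [Field L] {F : Type*} [Field F]
  [Algebra K L] [Algebra K F] [Algebra L F] [IsScalarTower K L F]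
  {E : Type*} [AddCommGroup E] [Module K E]
  {D : Type*} [Ring D] [Algebra K D] [Module D E] [IsScalarTower K D E]

lemma transfer (p : Submodule L (L ⊗[K] E))
    (hstab : ∀ d : D, ∀ x ∈ p, LinearMap.baseChange L (Algebra.lsmul K K E d) x ∈ p)
    (hbot : p ≠ ⊥) (htop : p ≠ ⊤) :
    ∃ q : Submodule F (F ⊗[K] E),
      (∀ d : D, ∀ x ∈ q, LinearMap.baseChange F (Algebra.lsmul K K E d) x ∈ q) ∧
      q ≠ ⊥ ∧ q ≠ ⊤ := by
  set ψ := psi (K := K) (L := L) (F := F) (E := E) with hψ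
  refine ⟨Submodule.span F (ψ '' p), ?_, ?_, ?_⟩
  · intro d x hx
    induction hx using Submodule.span_induction with
    | mem y hy =>
      obtain ⟨z, hz, rfl⟩ := hy
      rw [← psi_comm]
      exact Submodule.subset_span ⟨_, hstab d z hz, rfl⟩
    | zero => simp
    | add a b _ _ ha hb => rw [map_add]; exact Submodule.add_mem _ ha hb
    | smul c a _ ha => rw [map_smul]; exact Submodule.smul_mem _ _ ha
  · obtain ⟨y, hy, hy0⟩ := Submodule.exists_mem_ne_zero_of_ne_bot hbot
    intro hq
    have : ψ y ∈ Submodule.span F (ψ '' p) := Submodule.subset_span ⟨y, hy, rfl⟩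
    rw [hq, Submodule.mem_bot] at this
    exact hy0 (psi_injective (by simpa using this))
  · -- build Φ : F ⊗[K] E →ₗ[F] F ⊗[L] ((L ⊗[K] E) ⧸ p)
    set Q := (L ⊗[K] E) ⧸ p
    set Φ : F ⊗[K] E →ₗ[F] F ⊗[L] Q :=
      (LinearMap.baseChange F p.mkQ).comp
        (TensorProduct.AlgebraTensorModule.cancelBaseChange K L F F E).symm.toLinearMap with hΦ
    have key : ∀ y : L ⊗[K] E, Φ (ψ y) = 1 ⊗ₜ[L] (p.mkQ y) := by
      intro y
      induction y using TensorProduct.induction_on with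
      | zero => simp
      | tmul l e =>
        simp only [hΦ, hψ, psi_tmul, LinearMap.comp_apply, LinearEquiv.coe_coe,
          TensorProduct.AlgebraTensorModule.cancelBaseChange_symm_tmul,
          LinearMap.baseChange_tmul]
        rw [Algebra.algebraMap_eq_smul_one, TensorProduct.smul_tmul, ← map_smul]
        congr 1
        rw [TensorProduct.smul_tmul', smul_eq_mul, mul_one]
      | add a b ha hb => simp [map_add, ha, hb, TensorProduct.tmul_add]
    have hQnt : Nontrivial Q := Submodule.Quotient.nontrivial_iff.mpr htop
    have hFQ : Nontrivial (F ⊗[L] Q) := nontrivial_tensor_iff.mpr hQnt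
    have hΦsurj : Function.Surjective Φ := by
      have h1 : Function.Surjective (LinearMap.baseChange F p.mkQ) := by
        intro x
        induction x using TensorProduct.induction_on with
        | zero => exact ⟨0, map_zero _⟩
        | tmul a m =>
          obtain ⟨y, rfl⟩ := p.mkQ_surjective m
          exact ⟨a ⊗ₜ y, by simp⟩
        | add a b ha hb =>
          obtain ⟨x1, rfl⟩ := ha; obtain ⟨x2, rfl⟩ := hb
          exact ⟨x1 + x2, map_add _ _ _⟩
      exact h1.comp (TensorProduct.AlgebraTensorModule.cancelBaseChange K L F F E).symm.surjective
    intro hq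
    have hker : Submodule.span F (ψ '' p) ≤ LinearMap.ker Φ := by
      rw [Submodule.span_le]
      rintro _ ⟨y, hy, rfl⟩
      simp [LinearMap.mem_ker, key y, (Submodule.Quotient.mk_eq_zero p).2 hy,
        Submodule.mkQ_apply]
    rw [hq, top_le_iff] at hker
    obtain ⟨x, y, hxy⟩ := hFQ
    obtain ⟨a, rfl⟩ := hΦsurj x
    obtain ⟨b, rfl⟩ := hΦsurj y
    have : ∀ z : F ⊗[K] E, Φ z = 0 := fun z => LinearMap.mem_ker.mp (hker ▸ Submodule.mem_top)
    exact hxy ((this a).trans (this b).symm)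
end transfer

/-- Let `K` be a field of characteristic `0`, `D` an associative unital
`K`-algebra and `E` a left `D`-module.  The following are equivalent:
(a) `K̄ ⊗_K E` is simple over `K̄ ⊗_K D`, where `K̄` is an algebraic closure of `K`
(simplicity of the base change is expressed as: the base change is nonzero, and the only
`K̄`-subspaces stable under the (base-changed) `D`-action are `⊥` and `⊤`);
(b) `L ⊗_K E` is simple over `L ⊗_K D` for every finite field extension `L` of `K`. -/
theorem stmt_5 {K : Type u} [Field K] [CharZero K]
    {D : Type v} [Ring D] [Algebra K D]
    {E : Type v} [AddCommGroup E] [Module K E] [Module D E] [IsScalarTower K D E] :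
    (Nontrivial (AlgebraicClosure K ⊗[K] E) ∧
      ∀ p : Submodule (AlgebraicClosure K) (AlgebraicClosure K ⊗[K] E),
        (∀ d : D, ∀ x ∈ p,
          LinearMap.baseChange (AlgebraicClosure K) (Algebra.lsmul K K E d) x ∈ p) →
        p = ⊥ ∨ p = ⊤)
    ↔ (∀ (L : Type u) [Field L] [Algebra K L], FiniteDimensional K L →
        (Nontrivial (L ⊗[K] E) ∧
          ∀ p : Submodule L (L ⊗[K] E),
            (∀ d : D, ∀ x ∈ p,
              LinearMap.baseChange L (Algebra.lsmul K K E d) x ∈ p) →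
            p = ⊥ ∨ p = ⊤)) := by
  constructor
  · rintro ⟨hnt, hsimp⟩ L _ _ hfin
    haveI : Algebra.IsAlgebraic K L := Algebra.IsAlgebraic.of_finite K L
    letI : Algebra L (AlgebraicClosure K) :=
      (IsAlgClosed.lift (R := K) (S := L) (M := AlgebraicClosure K)).toRingHom.toAlgebra
    haveI : IsScalarTower K L (AlgebraicClosure K) :=
      IsScalarTower.of_algebraMap_eq fun x =>
        ((IsAlgClosed.lift (R := K) (S := L) (M := AlgebraicClosure K)).commutes x).symm
    refine ⟨nontrivial_tensor_iff.mpr (nontrivial_tensor_iff.mp hnt), ?_⟩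
    intro p hp
    by_contra h'
    push_neg at h'
    obtain ⟨q, hqstab, hqbot, hqtop⟩ :=
      transfer (F := AlgebraicClosure K) p hp h'.1 h'.2
    rcases hsimp q hqstab with h | h
    · exact hqbot h
    · exact hqtop h
  · intro hb
    classical
    have hK := hb K inferInstance
    refine ⟨nontrivial_tensor_iff.mpr (nontrivial_tensor_iff.mp hK.1), ?_⟩
    intro q hq
    by_contra h'
    push_neg at h'
    obtain ⟨v, hvq, hv0⟩ := Submodule.exists_mem_ne_zero_of_ne_bot h'.1
    obtain ⟨S, hS⟩ := TensorProduct.exists_finset v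
    set Lf := IntermediateField.adjoin K ((S.image Prod.fst : Finset _) : Set (AlgebraicClosure K)) with hLf
    haveI : FiniteDimensional K Lf :=
      IntermediateField.finiteDimensional_adjoin fun x _ =>
        Algebra.IsIntegral.isIntegral x
    set ψ : Lf ⊗[K] E →ₗ[Lf] AlgebraicClosure K ⊗[K] E :=
      psi (K := K) (L := Lf) (F := AlgebraicClosure K) (E := E) with hψ
    set p : Submodule Lf (Lf ⊗[K] E) :=
      Submodule.comap ψ (q.restrictScalars Lf) with hpdef
    have hpstab : ∀ d : D, ∀ x ∈ p, LinearMap.baseChange Lf (Algebra.lsmul K K E d) x ∈ p := by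
      intro d x hx
      simp only [hpdef, Submodule.mem_comap, Submodule.restrictScalars_mem] at hx ⊢
      convert hq d _ hx using 1
      exact psi_comm (K := K) (L := Lf) (F := AlgebraicClosure K) d x
    have hw : ∃ w : Lf ⊗[K] E, ψ w = v := by
      refine ⟨∑ i ∈ S.attach,
        (⟨i.1.1, IntermediateField.subset_adjoin K _
          (Finset.mem_coe.mpr (Finset.mem_image_of_mem Prod.fst i.2))⟩ : Lf) ⊗ₜ i.1.2, ?_⟩
      rw [map_sum, hS]
      rw [← Finset.sum_attach S (fun i => i.1 ⊗ₜ[K] i.2)]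
      refine Finset.sum_congr rfl fun i _ => ?_
      simp [hψ, psi_tmul]
      rfl
    obtain ⟨w, hwv⟩ := hw
    have hwp : w ∈ p := by
      simp only [hpdef, Submodule.mem_comap, Submodule.restrictScalars_mem, hwv]
      exact hvq
    have hpbot : p ≠ ⊥ := by
      intro hbot
      rw [hbot, Submodule.mem_bot] at hwp
      exact hv0 (by rw [← hwv, hwp, map_zero])
    have hptop : p ≠ ⊤ := by
      intro htop
      apply h'.2
      rw [eq_top_iff]
      intro x _
      induction x using TensorProduct.induction_on with
      | zero => exact Submodule.zero_mem q
      | tmul a e =>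
        have h1 : ((1 : Lf) ⊗ₜ[K] e : Lf ⊗[K] E) ∈ p := htop ▸ Submodule.mem_top
        have h2 : ψ ((1 : Lf) ⊗ₜ[K] e) ∈ q := h1
        have h3 : ψ ((1 : Lf) ⊗ₜ[K] e) = (1 : AlgebraicClosure K) ⊗ₜ[K] e := by
          simp [hψ, psi_tmul]
          rfl
        have := Submodule.smul_mem q a (h3 ▸ h2)
        rwa [TensorProduct.smul_tmul', smul_eq_mul, mul_one] at this
      | add a b ha hb =>
        exact Submodule.add_mem q (ha Submodule.mem_top) (hb Submodule.mem_top)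
    rcases (hb Lf ‹_›).2 p hpstab with h | h
    · exact hpbot h
    · exact hptop h
end

section
/- Let K be a field of characteristic 0 equipped with a nonarchimedean norm making it a normed field (‖x + y‖ ≤ max(‖x‖, ‖y‖)) such that ‖(n : K)‖ ≥ 1/n for every positive integer n. Let V be the set of sequences a : ℕ → K for which there exist a real constant c > 0 and η with 0 < η < 1 satisfying ‖a(n)‖ ≤ c·ηⁿ for all n. Define T on sequences by (Ta)(0) = 0 and (Ta)(n+1) = (n+1)·a(n). Then T maps V into V, T is injective on V, and every b ∈ V can be written uniquely as b = T(a) + λ·δ₀ with a ∈ V and λ ∈ K, where δ₀ is the sequence with δ₀(0) = 1 and δ₀(n) = 0 for n ≥ 1. (This computes that the de Rham complex of the delta module δ_z has vanishing H⁰ and one-dimensional H¹.) -/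
/-- The operator `T` on sequences: `(T a) 0 = 0` and `(T a) (n+1) = (n+1) • a n`. -/
def stmt11T {K : Type*} [Field K] (a : ℕ → K) : ℕ → K
  | 0 => 0
  | (m + 1) => ((m + 1 : ℕ) : K) * a m

/-- The sequence `δ₀` with `δ₀ 0 = 1` and `δ₀ n = 0` for `n ≥ 1`. -/
def stmt11delta {K : Type*} [Field K] : ℕ → K :=
  fun n => if n = 0 then 1 else 0

/-- Let `K` be a field of characteristic `0` with a nonarchimedean norm such
that `‖n‖ ≥ 1/n` for all positive integers `n`.  Let `V` be the set of sequences `a : ℕ → K`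
that are bounded by `c·ηⁿ` for some `c > 0` and `0 < η < 1`.  Then `T` maps `V` into `V`, `T`
is injective on `V`, and every `b ∈ V` can be written uniquely as `b = T a + λ • δ₀` with
`a ∈ V` and `λ ∈ K`. -/
theorem stmt_11 {K : Type*} [NormedField K] [CharZero K]
    (hultra : ∀ x y : K, ‖x + y‖ ≤ max ‖x‖ ‖y‖)
    (hnorm : ∀ n : ℕ, 0 < n → 1 / (n : ℝ) ≤ ‖((n : ℕ) : K)‖) :
    ∀ V : Set (ℕ → K),
      V = {a : ℕ → K | ∃ c : ℝ, 0 < c ∧ ∃ η : ℝ, 0 < η ∧ η < 1 ∧ ∀ n : ℕ, ‖a n‖ ≤ c * η ^ n} →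
      (∀ a ∈ V, stmt11T a ∈ V) ∧
      Set.InjOn stmt11T V ∧
      (∀ b ∈ V, ∃! p : (ℕ → K) × K,
        p.1 ∈ V ∧ b = stmt11T p.1 + p.2 • stmt11delta) := by
  intro V hV
  subst hV
  -- norms of naturals are at most 1
  have hle1 : ∀ n : ℕ, ‖((n : ℕ) : K)‖ ≤ 1 := by
    intro n
    induction n with
    | zero => simp
    | succ m ih =>
      have h := hultra ((m : ℕ) : K) 1
      push_cast
      push_cast at h
      refine h.trans ?_
      simp [ih]
  have hcast : ∀ n : ℕ, (((n + 1 : ℕ)) : K) ≠ 0 :=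
    fun n => Nat.cast_ne_zero.mpr (Nat.succ_ne_zero n)
  -- key real inequality: (n+1) s^n ≤ 1/(1-s)
  have key : ∀ s : ℝ, 0 < s → s < 1 → ∀ n : ℕ, ((n : ℝ) + 1) * s ^ n ≤ 1 / (1 - s) := by
    intro s hs0 hs1 n
    have h1 : (0 : ℝ) < 1 - s := by linarith
    have hsn : (0 : ℝ) < s ^ n := pow_pos hs0 n
    have hb : (1 : ℝ) + n * ((1 - s) / s) ≤ (1 + (1 - s) / s) ^ n := by
      apply one_add_mul_le_pow
      have : 0 ≤ (1 - s) / s := by positivity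
      linarith
    have h2 : (1 + (1 - s) / s : ℝ) = 1 / s := by field_simp; ring
    rw [h2, div_pow, one_pow] at hb
    rw [le_div_iff₀ h1]
    have h3 : ((n : ℝ) + 1) * (1 - s) ≤ 1 + n * ((1 - s) / s) := by
      have hn0 : (0 : ℝ) ≤ n := Nat.cast_nonneg n
      have h4 : (n : ℝ) * (1 - s) ≤ n * ((1 - s) / s) := by
        apply mul_le_mul_of_nonneg_left _ hn0
        rw [le_div_iff₀ hs0]
        nlinarith
      nlinarith
    calc ((n : ℝ) + 1) * s ^ n * (1 - s) = (((n : ℝ) + 1) * (1 - s)) * s ^ n := by ring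
      _ ≤ (1 + n * ((1 - s) / s)) * s ^ n :=
          mul_le_mul_of_nonneg_right h3 hsn.le
      _ ≤ (1 / s ^ n) * s ^ n := mul_le_mul_of_nonneg_right hb hsn.le
      _ = 1 := by field_simp
  refine ⟨?_, ?_, ?_⟩
  · -- T maps V to V
    rintro a ⟨c, hc, η, hη0, hη1, hbound⟩
    refine ⟨c / η, by positivity, η, hη0, hη1, ?_⟩
    intro n
    cases n with
    | zero =>
      show ‖(0 : K)‖ ≤ c / η * η ^ 0
      simp
      positivity
    | succ m =>
      show ‖(((m + 1 : ℕ)) : K) * a m‖ ≤ c / η * η ^ (m + 1)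
      rw [norm_mul]
      calc ‖(((m + 1 : ℕ)) : K)‖ * ‖a m‖ ≤ 1 * (c * η ^ m) :=
            mul_le_mul (hle1 _) (hbound m) (norm_nonneg _) zero_le_one
        _ = c / η * η ^ (m + 1) := by field_simp; ring
  · -- injectivity
    intro a _ a' _ h
    funext n
    have h1 := congrFun h (n + 1)
    simp only [stmt11T] at h1
    exact mul_left_cancel₀ (hcast n) h1
  · -- existence and uniqueness of decomposition
    rintro b ⟨c, hc, η, hη0, hη1, hbound⟩
    have hη'0 : (0 : ℝ) < (1 + η) / 2 := by linarith
    have hη'1 : (1 + η) / 2 < 1 := by linarith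
    have hs0 : (0 : ℝ) < η / ((1 + η) / 2) := by positivity
    have hs1 : η / ((1 + η) / 2) < 1 := by
      rw [div_lt_one hη'0]; linarith
    have h1ms : (0 : ℝ) < 1 - η / ((1 + η) / 2) := by linarith
    set a : ℕ → K := fun n => b (n + 1) / (((n + 1 : ℕ)) : K) with ha
    have heq : b = stmt11T a + (b 0) • stmt11delta := by
      funext n
      cases n with
      | zero => simp [stmt11T, stmt11delta]
      | succ m =>
        have : stmt11T a (m + 1) = b (m + 1) := by
          show (((m + 1 : ℕ)) : K) * (b (m + 1) / (((m + 1 : ℕ)) : K)) = b (m + 1)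
          rw [← mul_div_assoc]
          exact mul_div_cancel_left₀ _ (hcast m)
        simp [stmt11delta, this]
    have hamem : a ∈ {a : ℕ → K | ∃ c : ℝ, 0 < c ∧ ∃ η : ℝ, 0 < η ∧ η < 1 ∧
        ∀ n : ℕ, ‖a n‖ ≤ c * η ^ n} := by
      refine ⟨c * η * (1 / (1 - η / ((1 + η) / 2))), by positivity,
        (1 + η) / 2, hη'0, hη'1, ?_⟩
      intro n
      have hpos : (0 : ℝ) < ‖(((n + 1 : ℕ)) : K)‖ := norm_pos_iff.mpr (hcast n)
      have hnn : (0 : ℝ) < (n : ℝ) + 1 := by positivity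
      have h1 : ‖a n‖ ≤ ((n : ℝ) + 1) * ‖b (n + 1)‖ := by
        show ‖b (n + 1) / (((n + 1 : ℕ)) : K)‖ ≤ _
        rw [norm_div, div_le_iff₀ hpos]
        have h2 := hnorm (n + 1) (Nat.succ_pos n)
        push_cast at h2
        have h3 : (1 : ℝ) ≤ ((n : ℝ) + 1) * ‖(((n + 1 : ℕ)) : K)‖ := by
          have h4 := mul_le_mul_of_nonneg_left h2 hnn.le
          rw [mul_one_div, div_self hnn.ne'] at h4
          push_cast
          linarith
        calc ‖b (n + 1)‖ = ‖b (n + 1)‖ * 1 := (mul_one _).symm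
          _ ≤ ‖b (n + 1)‖ * (((n : ℝ) + 1) * ‖(((n + 1 : ℕ)) : K)‖) :=
              mul_le_mul_of_nonneg_left h3 (norm_nonneg _)
          _ = ((n : ℝ) + 1) * ‖b (n + 1)‖ * ‖(((n + 1 : ℕ)) : K)‖ := by ring
      have hpow : η ^ n = (η / ((1 + η) / 2)) ^ n * ((1 + η) / 2) ^ n := by
        rw [← mul_pow]
        congr 1
        field_simp
      have hkey := key (η / ((1 + η) / 2)) hs0 hs1 n
      calc ‖a n‖ ≤ ((n : ℝ) + 1) * ‖b (n + 1)‖ := h1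
        _ ≤ ((n : ℝ) + 1) * (c * η ^ (n + 1)) := by
            apply mul_le_mul_of_nonneg_left (hbound (n + 1)) hnn.le
        _ = c * η * (((n : ℝ) + 1) * (η / ((1 + η) / 2)) ^ n) * ((1 + η) / 2) ^ n := by
            rw [pow_succ, hpow]; ring
        _ ≤ c * η * (1 / (1 - η / ((1 + η) / 2))) * ((1 + η) / 2) ^ n := by
            apply mul_le_mul_of_nonneg_right _ (by positivity)
            apply mul_le_mul_of_nonneg_left hkey (by positivity)
    refine ⟨⟨a, b 0⟩, ⟨hamem, heq⟩, ?_⟩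
    rintro ⟨a', lam⟩ ⟨_, heq'⟩
    have h0 := congrFun heq' 0
    simp [stmt11T, stmt11delta] at h0
    have hA : a' = a := by
      funext n
      have hn := congrFun heq' (n + 1)
      simp [stmt11T, stmt11delta] at hn
      show _ = b (n + 1) / (((n + 1 : ℕ)) : K)
      rw [hn]
      push_cast
      rw [mul_div_cancel_left₀]
      exact_mod_cast hcast n
    simp [Prod.ext_iff, hA, h0]
end
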